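/- (Deterministic core of Theorem 3.3 under condition S1, case f = f_LogP.) Let f = f_LogP and assume θ/4 ≤ 1/(1−α−β). Then for every constant c ∈ (−(α+β)/(1−α−β), 0) the function φ̃_c(x) = f(x) − x/(1−α−β) − c has exactly one zero in [0,1]; consequently every point of Z(F) is a synchronization point. -/

import Mathlib

noncomputable section

/-- The drift field of the interacting system. -/
def Fmap (N : ℕ) (α β q : ℝ) (f : ℝ → ℝ) (z : Fin N → ℝ) : Fin N → ℝ :=
  fun h => α * ((N : ℝ)⁻¹ * ∑ i, z i) + β * q + (1 - α - β) * f (z h) - z h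

/-- The zero set of `Fmap` inside the cube `[0,1]^N`. -/
def ZeroSet (N : ℕ) (α β q : ℝ) (f : ℝ → ℝ) : Set (Fin N → ℝ) :=
  {z | (∀ h, z h ∈ Set.Icc (0 : ℝ) 1) ∧ Fmap N α β q f z = 0}

/-- The Logit Probability function `f_LogP(x) = 1/(1+exp(−θ(x−x*)))`. -/
def fLogP (θ xs x : ℝ) : ℝ := 1 / (1 + Real.exp (-θ * (x - xs)))

lemma fLogP_hasDerivAt (θ xs x : ℝ) :
    HasDerivAt (fLogP θ xs)
      (θ * Real.exp (-θ * (x - xs)) / (1 + Real.exp (-θ * (x - xs)))^2) x := by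
  have he : (0:ℝ) < Real.exp (-θ * (x - xs)) := Real.exp_pos _
  have hlin : HasDerivAt (fun y : ℝ => -θ * (y - xs)) (-θ) x := by
    simpa using ((hasDerivAt_id x).sub_const xs).const_mul (-θ)
  have hu : HasDerivAt (fun y : ℝ => 1 + Real.exp (-θ * (y - xs)))
      (Real.exp (-θ * (x - xs)) * (-θ)) x := by
    simpa using (hlin.exp.const_add 1)
  have hne : (1 + Real.exp (-θ * (x - xs))) ≠ 0 := by positivity
  have h := hu.inv hne
  convert h using 1
  · rfl
  · rfl
  · ext y; simp [fLogP, one_div]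
  · ring

lemma gAnti (α β θ xs : ℝ) (hθ : 0 < θ) (hs : 0 < 1 - α - β)
    (hcase : θ / 4 ≤ 1 / (1 - α - β)) :
    StrictAnti (fun x : ℝ => fLogP θ xs x - x / (1 - α - β)) := by
  set g : ℝ → ℝ := fun x => fLogP θ xs x - x / (1 - α - β) with hg
  have hder : ∀ x : ℝ, HasDerivAt g
      (θ * Real.exp (-θ * (x - xs)) / (1 + Real.exp (-θ * (x - xs)))^2 - 1 / (1 - α - β)) x := by
    intro x
    have h2 : HasDerivAt (fun y : ℝ => y / (1 - α - β)) (1 / (1 - α - β)) x := by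
      simpa using (hasDerivAt_id x).div_const (1 - α - β)
    exact (fLogP_hasDerivAt θ xs x).sub h2
  have hcont : Continuous g := by
    have : Differentiable ℝ g := fun x => (hder x).differentiableAt
    exact this.continuous
  have hneg : ∀ x : ℝ, x ≠ xs → deriv g x < 0 := by
    intro x hx
    rw [(hder x).deriv]
    have he : (0:ℝ) < Real.exp (-θ * (x - xs)) := Real.exp_pos _
    have hne1 : Real.exp (-θ * (x - xs)) ≠ 1 := by
      intro h
      have h0 : -θ * (x - xs) = 0 := Real.exp_injective (by rw [h, Real.exp_zero])
      have hx' : x - xs ≠ 0 := sub_ne_zero.mpr hx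
      exact (mul_ne_zero (by linarith : -θ ≠ 0) hx') h0
    set e := Real.exp (-θ * (x - xs))
    have hsq : 0 < (1 - e)^2 := by
      have : 1 - e ≠ 0 := by intro h; apply hne1; linarith
      positivity
    have h1 : θ * e / (1 + e)^2 < θ / 4 := by
      rw [div_lt_div_iff₀ (by positivity) (by norm_num)]
      nlinarith [hsq, he, hθ]
    linarith [h1, hcase]
  -- strict anti on each side of xs
  have hIic : StrictAntiOn g (Set.Iic xs) := by
    apply strictAntiOn_of_deriv_neg (convex_Iic xs) hcont.continuousOn
    intro x hx
    rw [interior_Iic] at hx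
    exact hneg x (ne_of_lt hx)
  have hIci : StrictAntiOn g (Set.Ici xs) := by
    apply strictAntiOn_of_deriv_neg (convex_Ici xs) hcont.continuousOn
    intro x hx
    rw [interior_Ici] at hx
    exact hneg x (ne_of_gt hx)
  intro x y hxy
  rcases le_total y xs with hy | hy
  · exact hIic (le_of_lt (lt_of_lt_of_le hxy hy)) hy hxy
  · rcases le_total xs x with hx | hx
    · exact hIci hx (le_of_lt (lt_of_le_of_lt hx hxy)) hxy
    · -- x ≤ xs ≤ y
      have h1 : g xs ≤ g x := by
        rcases eq_or_lt_of_le hx with h | h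
        · rw [h]
        · exact (hIic (Set.mem_Iic.mpr h.le) (Set.mem_Iic.mpr le_rfl) h).le
      have h2 : g y ≤ g xs := by
        rcases eq_or_lt_of_le hy with h | h
        · rw [← h]
        · exact (hIci (Set.mem_Ici.mpr le_rfl) (le_of_lt h) h).le
      rcases eq_or_lt_of_le hx with h | h
      · subst h
        exact lt_of_lt_of_le (hIci (Set.mem_Ici.mpr le_rfl) (le_of_lt hxy) hxy) le_rfl
      · exact lt_of_le_of_lt h2 (hIic (Set.mem_Iic.mpr h.le) (Set.mem_Iic.mpr le_rfl) h)

/-- deterministic core of Theorem 3.3 under condition S1, for `f = f_LogP`: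
if `θ/4 ≤ 1/(1−α−β)`, then for every `c ∈ (−(α+β)/(1−α−β), 0)` the function
`φ̃_c(x) = f(x) − x/(1−α−β) − c` has exactly one zero in `[0,1]`; consequently every point
of `Z(F)` is a synchronization point. -/
theorem stmt12 (N : ℕ) (hN : 1 ≤ N) (α β q : ℝ)
    (hα : α ∈ Set.Ico (0 : ℝ) 1) (hβ : β ∈ Set.Ico (0 : ℝ) 1)
    (hαβ : α + β ∈ Set.Ioo (0 : ℝ) 1) (hq : q ∈ Set.Ioc (0 : ℝ) 1)
    (θ xs : ℝ) (hθ : 0 < θ) (hxs : xs ∈ Set.Ioo (0 : ℝ) 1)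
    (hcase : θ / 4 ≤ 1 / (1 - α - β)) :
    (∀ c ∈ Set.Ioo (-(α + β) / (1 - α - β)) (0 : ℝ),
      ∃! x, x ∈ Set.Icc (0 : ℝ) 1 ∧ fLogP θ xs x - x / (1 - α - β) - c = 0) ∧
    ∀ z ∈ ZeroSet N α β q (fLogP θ xs), ∀ h j, z h = z j := by
  have hs : 0 < 1 - α - β := by linarith [hαβ.2]
  set g : ℝ → ℝ := fun x => fLogP θ xs x - x / (1 - α - β) with hgdef
  have hanti : StrictAnti g := gAnti α β θ xs hθ hs hcase
  have hcont : Continuous g := by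
    have : Differentiable ℝ g := fun x =>
      ((fLogP_hasDerivAt θ xs x).sub
        (by simpa using (hasDerivAt_id x).div_const (1 - α - β))).differentiableAt
    exact this.continuous
  constructor
  · intro c hc
    obtain ⟨hc1, hc2⟩ := hc
    have hg0 : 0 < g 0 - c := by
      have hf0 : 0 < fLogP θ xs 0 := by unfold fLogP; positivity
      have : g 0 = fLogP θ xs 0 := by simp [hgdef]
      rw [this]; linarith
    have hg1 : g 1 - c < 0 := by
      have hf1 : fLogP θ xs 1 < 1 := by
        unfold fLogP
        rw [div_lt_one (by positivity)]
        linarith [Real.exp_pos (-θ * (1 - xs))]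
      have hc1' : -(α + β) < c * (1 - α - β) := (div_lt_iff₀ hs).mp hc1
      have hinv : (1:ℝ) / (1 - α - β) * (1 - α - β) = 1 := by field_simp
      have : g 1 = fLogP θ xs 1 - 1 / (1 - α - β) := by simp [hgdef]
      rw [this]
      nlinarith [hf1, hc1', hinv, hs]
    have hivt := intermediate_value_Icc' (by norm_num : (0:ℝ) ≤ 1)
      hcont.continuousOn (a := 0) (b := 1)
    have h0mem' : c ∈ Set.Icc (g 1) (g 0) := by
      constructor <;> linarith
    obtain ⟨x, hx, hgx⟩ := hivt h0mem'
    refine ⟨x, ⟨hx, by simp [hgdef] at hgx ⊢; linarith [hgx]⟩, ?_⟩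
    intro y hy
    have : g y = g x := by
      have h1 : g y - c = 0 := hy.2
      have h2 : g x = c := hgx
      linarith
    exact hanti.injective this
  · rintro z ⟨hz1, hz2⟩ h j
    have eh := congrFun hz2 h
    have ej := congrFun hz2 j
    simp only [Fmap, Pi.zero_apply] at eh ej
    have : g (z h) = g (z j) := by
      simp only [hgdef]
      field_simp
      linarith
    exact hanti.injective this

end
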